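/- With A_n and B_n as defined, A_n^T (I_n - B_n) equals the projection I_n - (1/n)·1_n 1_n^T onto the orthogonal complement of the all-ones vector. -/

import Mathlib

open Finset Matrix


lemma tele (n m : ℕ) (hm : m < n) :
    ∑ k ∈ Finset.range m, (-1 / ((n:ℝ) - 1 - k) * (0 - 1 / ((n:ℝ) - k)))
      = 1 / ((n:ℝ) - m) - 1 / (n:ℝ) := by
  have h : ∀ k ∈ Finset.range m,
      -1 / ((n:ℝ) - 1 - k) * (0 - 1 / ((n:ℝ) - k))
        = (fun k : ℕ => 1 / ((n:ℝ) - k)) (k + 1) - (fun k : ℕ => 1 / ((n:ℝ) - k)) k := by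
    intro k hk
    simp only [Finset.mem_range] at hk
    have hk1 : (k:ℝ) < (n:ℝ) - 1 := by
      have : k + 1 < n := by omega
      have := (Nat.cast_lt (α := ℝ)).2 this
      push_cast at this ⊢; linarith
    have h1 : (n:ℝ) - 1 - k ≠ 0 := by linarith
    have h2 : (n:ℝ) - k ≠ 0 := by linarith
    have h3 : (n:ℝ) - (k + 1 : ℕ) ≠ 0 := by push_cast; linarith
    push_cast
    rw [show (n:ℝ) - ((k:ℝ)+1) = (n:ℝ) - 1 - k by ring]
    field_simp
    ring
  rw [Finset.sum_congr rfl h, Finset.sum_range_sub (fun k : ℕ => 1 / ((n:ℝ) - k))]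
  norm_num

lemma key (n i j : ℕ) (hn : 2 ≤ n) (hi : i < n) (hj : j < n) :
    ∑ k ∈ Finset.range n,
      ((if k + 1 < n then (if i = k then (1:ℝ) else if k < i then -1 / ((n:ℝ) - 1 - k) else 0) else 0) *
        ((if k = j then (1:ℝ) else 0) - if k ≤ j then 1 / ((n:ℝ) - k) else 0))
    = (if i = j then (1:ℝ) else 0) - (n:ℝ)⁻¹ := by
  set F : ℕ → ℝ := fun k =>
    ((if k + 1 < n then (if i = k then (1:ℝ) else if k < i then -1 / ((n:ℝ) - 1 - k) else 0) else 0) *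
      ((if k = j then (1:ℝ) else 0) - if k ≤ j then 1 / ((n:ℝ) - k) else 0)) with hF
  -- split at i
  rw [← Finset.sum_range_add_sum_Ico F hi.le]
  -- tail sum
  have htail : ∑ k ∈ Finset.Ico i n, F k
      = (if i + 1 < n then (1:ℝ) else 0) *
          ((if i = j then (1:ℝ) else 0) - if i ≤ j then 1 / ((n:ℝ) - i) else 0) := by
    rw [Finset.sum_eq_single_of_mem i (Finset.mem_Ico.2 ⟨le_refl i, hi⟩)]
    · simp [hF]
    · intro k hk hki
      have hk' := Finset.mem_Ico.1 hk
      have h1 : ¬ (i = k) := fun h => hki (h.symm)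
      have h2 : ¬ (k < i) := by omega
      simp [hF, h1, h2]
  rw [htail]
  -- head sum: each term with k < i
  have hhead : ∀ k ∈ Finset.range i, F k
      = -1 / ((n:ℝ) - 1 - k) * ((if k = j then (1:ℝ) else 0) - if k ≤ j then 1 / ((n:ℝ) - k) else 0) := by
    intro k hk
    have hk' := Finset.mem_range.1 hk
    have h1 : k + 1 < n := by omega
    have h2 : ¬ (i = k) := by omega
    simp [hF, h1, h2, hk']
  rw [Finset.sum_congr rfl hhead]
  have hn0 : (n:ℝ) ≠ 0 := by positivity
  rcases le_or_gt i j with hij | hij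
  · -- case i ≤ j
    have hc : ∀ k ∈ Finset.range i, (-1 / ((n:ℝ) - 1 - k) *
        ((if k = j then (1:ℝ) else 0) - if k ≤ j then 1 / ((n:ℝ) - k) else 0))
        = -1 / ((n:ℝ) - 1 - k) * (0 - 1 / ((n:ℝ) - k)) := by
      intro k hk
      have hk' := Finset.mem_range.1 hk
      have h1 : ¬ (k = j) := by omega
      have h2 : k ≤ j := by omega
      simp [h1, h2]
    rw [Finset.sum_congr rfl hc, tele n i hi]
    by_cases hi1 : i + 1 < n
    · have h2 : i ≤ j := hij
      have hni : ((n:ℝ) - i) ≠ 0 := by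
        have : (i:ℝ) < n := by exact_mod_cast hi
        linarith
      simp only [hi1, if_true, h2, if_true, one_mul]
      rw [one_div (n:ℝ)]
      ring
    · -- i = n - 1, so j = i
      have hieq : i = n - 1 := by omega
      have hjeq : j = i := by omega
      have hcast : ((n:ℝ) - (i:ℕ)) = 1 := by
        rw [hieq]; push_cast [Nat.cast_sub (by omega : 1 ≤ n)]; ring
      simp only [hi1, if_false, zero_mul, add_zero, hjeq, if_pos rfl, hcast]
      rw [one_div (n:ℝ)]
      norm_num
  · -- case j < i
    have hsplit : Finset.range i = Finset.range (j+1) ∪ Finset.Ico (j+1) i := by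
      rw [Finset.range_eq_Ico, Finset.range_eq_Ico]
      exact (Finset.Ico_union_Ico_eq_Ico (show 0 ≤ j+1 by omega) (show j+1 ≤ i by omega)).symm
    rw [hsplit, Finset.sum_union (by
      rw [Finset.range_eq_Ico]
      exact Finset.Ico_disjoint_Ico_consecutive 0 (j+1) i)]
    have hzero : ∑ k ∈ Finset.Ico (j+1) i, (-1 / ((n:ℝ) - 1 - k) *
        ((if k = j then (1:ℝ) else 0) - if k ≤ j then 1 / ((n:ℝ) - k) else 0)) = 0 := by
      apply Finset.sum_eq_zero
      intro k hk
      have hk' := Finset.mem_Ico.1 hk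
      have h1 : ¬ (k = j) := by omega
      have h2 : ¬ (k ≤ j) := by omega
      simp [h1, h2]
    rw [hzero, add_zero, Finset.sum_range_succ]
    have hc : ∀ k ∈ Finset.range j, (-1 / ((n:ℝ) - 1 - k) *
        ((if k = j then (1:ℝ) else 0) - if k ≤ j then 1 / ((n:ℝ) - k) else 0))
        = -1 / ((n:ℝ) - 1 - k) * (0 - 1 / ((n:ℝ) - k)) := by
      intro k hk
      have hk' := Finset.mem_range.1 hk
      have h1 : ¬ (k = j) := by omega
      have h2 : k ≤ j := by omega
      simp [h1, h2]
    rw [Finset.sum_congr rfl hc, tele n j hj]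
    have h1 : ¬ (i = j) := by omega
    have h2 : ¬ (i ≤ j) := by omega
    have hjn : (j:ℝ) < (n:ℝ) - 1 := by
      have : j + 1 < n := by omega
      have := (Nat.cast_lt (α := ℝ)).2 this
      push_cast at this ⊢; linarith
    have d1 : (n:ℝ) - 1 - j ≠ 0 := by linarith
    have d2 : (n:ℝ) - j ≠ 0 := by linarith
    simp only [if_pos rfl, le_refl, if_true, h1, h2, if_false]
    rw [one_div (n:ℝ)]
    by_cases hi1 : i + 1 < n <;> simp only [hi1, if_true, if_false, one_mul, zero_mul] <;>
      field_simp <;> ring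


/-- The lower-averaging matrix `B_n`: (1-based) entry `(i,j)` equals `1/(n+1-i)` for `j ≥ i`,
and `0` otherwise. -/
noncomputable def lowerAvg (n : ℕ) : Matrix (Fin n) (Fin n) ℝ :=
  Matrix.of fun i j => if i ≤ j then (1 : ℝ) / ((n : ℝ) - (i : ℕ)) else 0

/-- The matrix `A_n`: (1-based) row `i ∈ [n-1]` is `(0_{i-1}, 1, -1/(n-i)·1_{n-i})`, and the
`n`-th row is zero. -/
noncomputable def diffMat (n : ℕ) : Matrix (Fin n) (Fin n) ℝ :=
  Matrix.of fun i j =>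
    if (i : ℕ) + 1 < n then
      (if j = i then (1 : ℝ)
        else if i < j then -(1 : ℝ) / ((n : ℝ) - 1 - (i : ℕ)) else 0)
    else 0

/-- `Aₙᵀ (I - Bₙ) = I - (1/n)·1ₙ1ₙᵀ`, the projection onto the orthogonal
complement of the all-ones vector. -/
theorem diffMat_transpose_mul (n : ℕ) (hn : 2 ≤ n) :
    (diffMat n)ᵀ * ((1 : Matrix (Fin n) (Fin n) ℝ) - lowerAvg n) =
      (1 : Matrix (Fin n) (Fin n) ℝ) - ((n : ℝ))⁻¹ • Matrix.of fun _ _ => (1 : ℝ) := by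
  ext i j
  simp only [Matrix.mul_apply, Matrix.transpose_apply, Matrix.sub_apply, Matrix.one_apply,
    Matrix.smul_apply, Matrix.of_apply, diffMat, lowerAvg, smul_eq_mul, mul_one,
    Fin.ext_iff, Fin.lt_def, Fin.le_def]
  rw [Fin.sum_univ_eq_sum_range (fun k : ℕ =>
    ((if k + 1 < n then (if (i:ℕ) = k then (1:ℝ) else if k < (i:ℕ) then -1 / ((n:ℝ) - 1 - k) else 0) else 0) *
      ((if k = (j:ℕ) then (1:ℝ) else 0) - if k ≤ (j:ℕ) then 1 / ((n:ℝ) - k) else 0)))]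
  exact key n i j hn i.isLt j.isLt
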